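/- Let G be the graph obtained from ℤ^d with a rooted r-regular tree planted at each vertex (root degree r), and suppose p_c(ℤ^d) < p < 1/r. Then there exist ψ₁(p) < ∞ and ψ₂(p) > 0 such that for all n ≥ 1, exp(−ψ₁(p) n^{(d−1)/d}) ≤ P_p( n ≤ |C| < ∞ ) ≤ exp(−ψ₂(p) n^{(d−1)/d}), where C is the open cluster of the origin, GIVEN the following facts: (i) for supercritical percolation on ℤ^d, exp(−φ₁ n^{(d−1)/d}) ≤ P_p(n ≤ |C_{ℤ^d}| < ∞) ≤ exp(−φ₂ n^{(d−1)/d}); (ii) the total size of a subcritical Binomial(r,p) Galton–Watson tree has finite mean and finite exponential moments; (iii) conditioned on C_{ℤ^d}, the tree clusters at its vertices are i.i.d. subcritical Galton–Watson trees. -/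

import Mathlib

open MeasureTheory ProbabilityTheory Set
open scoped ENNReal

/-- The graph obtained from `ℤ^d` by planting at every vertex `x` a rooted infinite regular
tree (root degree `r`): the vertex `(x, l)` is the tree vertex with address `l` over `x`. -/
def treeLatticeGraph (d r : ℕ) : SimpleGraph ((Fin d → ℤ) × List (Fin r)) :=
  SimpleGraph.fromRel (fun u v =>
    (u.2 = [] ∧ v.2 = [] ∧ (∑ i : Fin d, |u.1 i - v.1 i|) = 1) ∨
    (u.1 = v.1 ∧ ∃ i : Fin r, v.2 = i :: u.2))

/-- The subgraph of open edges in the configuration `ω`. -/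
def openSubgraph {V : Type*} (G : SimpleGraph V) (ω : Sym2 V → Bool) : SimpleGraph V :=
  G.deleteEdges {e | ω e = false}

/-- `P` is i.i.d. Bernoulli(p) bond percolation on `G`. -/
def IsBernoulliPercolation {V : Type*} (G : SimpleGraph V) (p : ℝ≥0∞) (hp : p ≤ 1)
    (P : Measure (Sym2 V → Bool)) : Prop :=
  IsProbabilityMeasure P ∧
  iIndepFun
    (fun (e : G.edgeSet) (ω : Sym2 V → Bool) => ω (e : Sym2 V)) P ∧
  ∀ e : G.edgeSet, P.map (fun ω => ω (e : Sym2 V)) = (PMF.bernoulli p.toNNReal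
    (by simpa using ENNReal.toNNReal_mono ENNReal.one_ne_top hp)).toMeasure

/-- The open cluster `C` of the origin in the composite graph. -/
def clusterC (d r : ℕ) (ω : Sym2 ((Fin d → ℤ) × List (Fin r)) → Bool) :
    Set ((Fin d → ℤ) × List (Fin r)) :=
  {u | (openSubgraph (treeLatticeGraph d r) ω).Reachable ((fun _ => 0), []) u}

/-- The lattice part `C ∩ ℤ^d` of the cluster of the origin. -/
def clusterCZ (d r : ℕ) (ω : Sym2 ((Fin d → ℤ) × List (Fin r)) → Bool) :
    Set (Fin d → ℤ) :=
  {x | (openSubgraph (treeLatticeGraph d r) ω).Reachable ((fun _ => 0), []) (x, [])}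

/-- The tree cluster hanging at the lattice vertex `x`. -/
def treeCluster (d r : ℕ) (x : Fin d → ℤ) (ω : Sym2 ((Fin d → ℤ) × List (Fin r)) → Bool) :
    Set (List (Fin r)) :=
  {l | (openSubgraph (treeLatticeGraph d r) ω).Reachable (x, []) (x, l)}

namespace SubexpAux

/-! ### Graph lemmas -/

variable {d r : ℕ}

abbrev Vt (d r : ℕ) := (Fin d → ℤ) × List (Fin r)
abbrev Cfg (d r : ℕ) := Sym2 (Vt d r) → Bool

lemma open_adj_cases {ω : Cfg d r} {u v : Vt d r}
    (h : (openSubgraph (treeLatticeGraph d r) ω).Adj u v) :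
    u.1 = v.1 ∨ (openSubgraph (treeLatticeGraph d r) ω).Adj (u.1, ([] : List (Fin r))) (v.1, []) := by
  have h' := h
  rw [openSubgraph, SimpleGraph.deleteEdges_adj, treeLatticeGraph, SimpleGraph.fromRel_adj] at h
  rcases h with ⟨⟨hne, hrel⟩, hopen⟩
  rcases hrel with (⟨h1, h2, h3⟩ | ⟨h1, h2⟩) | (⟨h1, h2, h3⟩ | ⟨h1, h2⟩)
  · right
    have hu : u = (u.1, ([] : List (Fin r))) := by ext <;> simp [h1]
    have hv : v = (v.1, ([] : List (Fin r))) := by ext <;> simp [h2]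
    rw [← hu, ← hv]
    exact h'
  · left; exact h1
  · right
    have hu : u = (u.1, ([] : List (Fin r))) := by ext <;> simp [h2]
    have hv : v = (v.1, ([] : List (Fin r))) := by ext <;> simp [h1]
    rw [← hu, ← hv]
    exact h'
  · left; exact h1.symm

lemma reach_roots {ω : Cfg d r} {u v : Vt d r}
    (h : (openSubgraph (treeLatticeGraph d r) ω).Reachable u v) :
    (openSubgraph (treeLatticeGraph d r) ω).Reachable (u.1, ([] : List (Fin r))) (v.1, []) := by
  obtain ⟨w⟩ := h
  induction w with
  | nil => exact SimpleGraph.Reachable.refl _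
  | @cons a b c hab p ih =>
    rcases open_adj_cases hab with h1 | h1
    · rw [h1]; exact ih
    · exact (h1.reachable).trans ih

lemma mem_clusterC_iff {ω : Cfg d r} {x : Fin d → ℤ} {l : List (Fin r)} :
    (x, l) ∈ clusterC d r ω ↔ x ∈ clusterCZ d r ω ∧ l ∈ treeCluster d r x ω := by
  constructor
  · intro h
    have h0 := reach_roots (u := ((fun _ => 0 : Fin d → ℤ), ([] : List (Fin r)))) (v := (x, l)) h
    exact ⟨h0, (h0.symm.trans h : _)⟩
  · rintro ⟨h1, h2⟩
    exact h1.trans h2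

lemma clusterCZ_eq_preimage (ω : Cfg d r) :
    clusterCZ d r ω = (fun x : Fin d → ℤ => (x, ([] : List (Fin r)))) ⁻¹' clusterC d r ω := rfl

lemma origin_mem_clusterCZ (ω : Cfg d r) : (fun _ => 0 : Fin d → ℤ) ∈ clusterCZ d r ω :=
  SimpleGraph.Reachable.refl _

lemma clusterCZ_finite {ω : Cfg d r} (h : (clusterC d r ω).Finite) :
    (clusterCZ d r ω).Finite := by
  rw [clusterCZ_eq_preimage]
  refine h.preimage (Set.injOn_of_injective ?_)
  intro a b hab
  exact congrArg Prod.fst hab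

/-! ### Measurability -/

lemma measurableSet_chain {V : Type*} (G : SimpleGraph V) (l : List V) (u : V) :
    MeasurableSet {ω : Sym2 V → Bool | List.Chain (fun a b => (openSubgraph G ω).Adj a b) u l} := by
  induction l generalizing u with
  | nil => simp [List.Chain]
  | cons b t ih =>
    have : {ω : Sym2 V → Bool | List.Chain (fun a b => (openSubgraph G ω).Adj a b) u (b :: t)}
        = {ω : Sym2 V → Bool | (openSubgraph G ω).Adj u b} ∩
          {ω | List.Chain (fun a b => (openSubgraph G ω).Adj a b) b t} := by
      ext ω; simp [List.Chain, List.isChain_cons_cons]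
    rw [this]
    refine MeasurableSet.inter ?_ (ih b)
    by_cases hG : G.Adj u b
    · have : {ω : Sym2 V → Bool | (openSubgraph G ω).Adj u b} = {ω | ω s(u, b) = true} := by
        ext ω
        simp [openSubgraph, SimpleGraph.deleteEdges_adj, hG]
      rw [this]
      exact (measurable_pi_apply (X := fun _ : Sym2 V => Bool) s(u, b)) (measurableSet_singleton true)
    · have : {ω : Sym2 V → Bool | (openSubgraph G ω).Adj u b} = ∅ := by
        ext ω
        simp [openSubgraph, SimpleGraph.deleteEdges_adj, hG]
      rw [this]; exact MeasurableSet.empty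

lemma measurableSet_reachable {V : Type*} [Countable V] (G : SimpleGraph V) (u v : V) :
    MeasurableSet {ω : Sym2 V → Bool | (openSubgraph G ω).Reachable u v} := by
  classical
  have : {ω : Sym2 V → Bool | (openSubgraph G ω).Reachable u v}
      = ⋃ l : List V, if (u :: l).getLast (List.cons_ne_nil _ _) = v then
          {ω : Sym2 V → Bool | List.Chain (fun a b => (openSubgraph G ω).Adj a b) u l} else ∅ := by
    ext ω
    simp only [mem_setOf_eq, mem_iUnion]
    constructor
    · intro h
      rw [SimpleGraph.reachable_iff_reflTransGen] at h
      obtain ⟨l, hl1, hl2⟩ := List.exists_isChain_cons_of_relationReflTransGen h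
      exact ⟨l, by rw [if_pos hl2]; exact hl1⟩
    · rintro ⟨l, hl⟩
      by_cases h : (u :: l).getLast (List.cons_ne_nil _ _) = v
      · rw [if_pos h] at hl
        rw [SimpleGraph.reachable_iff_reflTransGen]
        exact List.relationReflTransGen_of_exists_isChain_cons l hl h
      · rw [if_neg h] at hl; exact absurd hl (notMem_empty ω)
  rw [this]
  refine MeasurableSet.iUnion fun l => ?_
  by_cases h : (u :: l).getLast (List.cons_ne_nil _ _) = v
  · rw [if_pos h]; exact measurableSet_chain G l u
  · rw [if_neg h]; exact MeasurableSet.empty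

lemma measurableSet_clusterCZ_eq (A : Finset (Fin d → ℤ)) :
    MeasurableSet {ω : Cfg d r | clusterCZ d r ω = ↑A} := by
  have : {ω : Cfg d r | clusterCZ d r ω = ↑A}
      = ⋂ x : Fin d → ℤ, (if x ∈ A then
          {ω : Cfg d r | (openSubgraph (treeLatticeGraph d r) ω).Reachable ((fun _ => 0), []) (x, [])}
        else
          {ω : Cfg d r | (openSubgraph (treeLatticeGraph d r) ω).Reachable ((fun _ => 0), []) (x, [])}ᶜ) := by
    ext ω
    simp only [mem_setOf_eq, mem_iInter, Set.ext_iff]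
    constructor
    · intro h x
      by_cases hx : x ∈ A
      · rw [if_pos hx]
        exact (h x).mpr (by exact_mod_cast hx)
      · rw [if_neg hx]
        intro hc
        exact hx (by exact_mod_cast (h x).mp hc)
    · intro h x
      constructor
      · intro hc
        by_cases hx : x ∈ A
        · exact_mod_cast hx
        · have := h x; rw [if_neg hx] at this; exact absurd hc this
      · intro hx
        have hx' : x ∈ A := by exact_mod_cast hx
        have := h x; rw [if_pos hx'] at this; exact this
  rw [this]
  refine MeasurableSet.iInter fun x => ?_
  by_cases hx : x ∈ A
  · rw [if_pos hx]; exact measurableSet_reachable _ _ _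
  · rw [if_neg hx]; exact (measurableSet_reachable _ _ _).compl

/-! ### tsum over finite products -/

lemma tsum_pi_fin_prod (h : ℕ → ℝ≥0∞) : ∀ k : ℕ,
    (∑' g : Fin k → ℕ, ∏ i, h (g i)) = (∑' j, h j) ^ k := by
  intro k
  induction k with
  | zero =>
    rw [tsum_eq_single (default : Fin 0 → ℕ) (fun b hb => (hb (Subsingleton.elim b default)).elim)]
    simp
  | succ k ih =>
    rw [← (Fin.consEquiv (fun _ : Fin (k+1) => ℕ)).tsum_eq fun g => ∏ i, h (g i)]
    have : ∀ q : ℕ × (Fin k → ℕ),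
        (∏ i, h (((Fin.consEquiv (fun _ : Fin (k+1) => ℕ)) q) i)) = h q.1 * ∏ i, h (q.2 i) := by
      intro q
      rw [Fin.prod_univ_succ]
      simp [Fin.consEquiv]
    rw [tsum_congr this, ENNReal.tsum_prod']
    simp_rw [ENNReal.tsum_mul_left, ENNReal.tsum_mul_right, ih]
    rw [pow_succ]
    ring

lemma prod_ofReal_exp {ι : Type*} (t : Finset ι) (f : ι → ℝ) :
    (∏ i ∈ t, ENNReal.ofReal (Real.exp (f i))) = ENNReal.ofReal (Real.exp (∑ i ∈ t, f i)) := by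
  induction t using Finset.cons_induction with
  | empty => simp
  | cons a t ha ih =>
    rw [Finset.prod_cons, Finset.sum_cons, ih, Real.exp_add,
      ENNReal.ofReal_mul (Real.exp_nonneg _)]

end SubexpAux

namespace SubexpAux

lemma one_le_Mtot (ν : Measure ℕ) [IsProbabilityMeasure ν] {s : ℝ} (hs : 0 ≤ s) :
    1 ≤ ∫⁻ k, ENNReal.ofReal (Real.exp (s * k)) ∂ν := by
  have h1 : (1 : ℝ≥0∞) = ∫⁻ _, 1 ∂ν := by rw [lintegral_one, measure_univ]
  rw [h1]
  refine lintegral_mono fun k => ?_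
  rw [show (1 : ℝ≥0∞) = ENNReal.ofReal (Real.exp 0) by simp]
  exact ENNReal.ofReal_le_ofReal (Real.exp_le_exp.mpr (by positivity))

lemma upper_core (d r : ℕ)
    (P : Measure (Cfg d r)) [IsProbabilityMeasure P]
    (ν : Measure ℕ) [IsProbabilityMeasure ν] (s : ℝ) (hs : 0 < s)
    (hcondiid : ∀ (A : Finset (Fin d → ℤ)) (f : (Fin d → ℤ) → Set ℕ),
      P {ω | clusterCZ d r ω = ↑A ∧ ∀ x ∈ A, (treeCluster d r x ω).ncard ∈ f x} =
        P {ω | clusterCZ d r ω = ↑A} * ∏ x ∈ A, ν (f x))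
    (m n : ℕ) :
    P {ω | (clusterC d r ω).Finite ∧ n ≤ (clusterC d r ω).ncard} ≤
      P {ω | ∃ x : Fin d → ℤ, (treeCluster d r x ω).Infinite}
      + P {ω | (clusterCZ d r ω).Finite ∧ m ≤ (clusterCZ d r ω).ncard}
      + ENNReal.ofReal (Real.exp (-(s * n)))
        * (∫⁻ k, ENNReal.ofReal (Real.exp (s * k)) ∂ν) ^ m := by
  classical
  set Mtot : ℝ≥0∞ := ∫⁻ k, ENNReal.ofReal (Real.exp (s * k)) ∂ν with hMtot
  set Mh : ℕ → ℝ≥0∞ := fun j => ENNReal.ofReal (Real.exp (s * j)) * ν {j} with hMh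
  have hMtot_eq : Mtot = ∑' j, Mh j := lintegral_countable' _
  -- the family of elementary events
  set fA : (A : Finset (Fin d → ℤ)) → (Fin A.card → ℕ) → (Fin d → ℤ) → Set ℕ :=
    fun A g x => if h : x ∈ A then {g (A.equivFin ⟨x, h⟩)} else Set.univ with hfA
  set S : ((A : Finset (Fin d → ℤ)) × (Fin A.card → ℕ)) → Set (Cfg d r) :=
    fun σ => if σ.1.card < m ∧ n ≤ ∑ i, σ.2 i then
      {ω | clusterCZ d r ω = ↑σ.1 ∧ ∀ x ∈ σ.1, (treeCluster d r x ω).ncard ∈ fA σ.1 σ.2 x}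
      else ∅ with hS
  -- Step 1 : inclusion
  have hincl : {ω : Cfg d r | (clusterC d r ω).Finite ∧ n ≤ (clusterC d r ω).ncard} ⊆
      {ω : Cfg d r | ∃ x : Fin d → ℤ, (treeCluster d r x ω).Infinite}
      ∪ {ω : Cfg d r | (clusterCZ d r ω).Finite ∧ m ≤ (clusterCZ d r ω).ncard}
      ∪ ⋃ σ, S σ := by
    rintro ω ⟨hCf, hn⟩
    by_cases hbad : ∃ x : Fin d → ℤ, (treeCluster d r x ω).Infinite
    · exact Or.inl (Or.inl hbad)
    push_neg at hbad
    have htf : ∀ x, (treeCluster d r x ω).Finite := fun x => hbad x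
    have hCZf : (clusterCZ d r ω).Finite := clusterCZ_finite hCf
    by_cases hlat : m ≤ (clusterCZ d r ω).ncard
    · exact Or.inl (Or.inr ⟨hCZf, hlat⟩)
    push_neg at hlat
    right
    set A : Finset (Fin d → ℤ) := hCZf.toFinset with hA
    have hAcoe : ↑A = clusterCZ d r ω := hCZf.coe_toFinset
    have hAcard : A.card = (clusterCZ d r ω).ncard := (Set.ncard_eq_toFinset_card _ hCZf).symm
    set g : Fin A.card → ℕ := fun i => (treeCluster d r (↑(A.equivFin.symm i)) ω).ncard with hg
    refine mem_iUnion.mpr ⟨⟨A, g⟩, ?_⟩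
    have hsum : n ≤ ∑ i, g i := by
      have hsub : hCf.toFinset ⊆ A.biUnion (fun x => (htf x).toFinset.image (fun l => (x, l))) := by
        intro u hu
        have hu' : u ∈ clusterC d r ω := (Set.Finite.mem_toFinset _).mp hu
        obtain ⟨x, l⟩ := u
        rw [mem_clusterC_iff] at hu'
        refine Finset.mem_biUnion.mpr ⟨x, ?_, Finset.mem_image.mpr ⟨l, ?_, rfl⟩⟩
        · exact (Set.Finite.mem_toFinset _).mpr hu'.1
        · exact (Set.Finite.mem_toFinset _).mpr hu'.2
      have h1 : (clusterC d r ω).ncard ≤ ∑ x ∈ A, (treeCluster d r x ω).ncard := by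
        rw [Set.ncard_eq_toFinset_card _ hCf]
        calc hCf.toFinset.card
            ≤ (A.biUnion (fun x => (htf x).toFinset.image (fun l => (x, l)))).card :=
              Finset.card_le_card hsub
          _ ≤ ∑ x ∈ A, ((htf x).toFinset.image (fun l => (x, l))).card :=
              Finset.card_biUnion_le
          _ ≤ ∑ x ∈ A, (treeCluster d r x ω).ncard := by
              refine Finset.sum_le_sum fun x _ => ?_
              rw [Set.ncard_eq_toFinset_card _ (htf x)]
              exact Finset.card_image_le
      have h2 : ∑ x ∈ A, (treeCluster d r x ω).ncard = ∑ i, g i := by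
        rw [← Finset.sum_coe_sort A (fun x => (treeCluster d r x ω).ncard)]
        rw [← Equiv.sum_comp A.equivFin.symm
          (fun x : {y // y ∈ A} => (treeCluster d r (↑x) ω).ncard)]
      exact le_trans (le_trans hn h1) (le_of_eq h2)
    have hcond : A.card < m ∧ n ≤ ∑ i, g i := by
      constructor
      · rw [hAcard]; exact hlat
      · exact hsum
    rw [hS]
    simp only [if_pos hcond]
    refine ⟨hAcoe.symm, fun x hx => ?_⟩
    rw [hfA]
    simp only [dif_pos hx]
    rw [hg]
    simp only [mem_singleton_iff, Equiv.symm_apply_apply]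
  -- Step 2 : measure bound for the union
  refine le_trans (measure_mono hincl) ?_
  refine le_trans (measure_union_le _ _) ?_
  refine le_trans (add_le_add (measure_union_le _ _) (measure_iUnion_le S)) ?_
  refine add_le_add le_rfl ?_
  -- Step 3 : bound the sum
  have hM1 : 1 ≤ Mtot := one_le_Mtot ν hs.le
  have hAbound : ∀ A : Finset (Fin d → ℤ),
      (∑' g : Fin A.card → ℕ, P (S ⟨A, g⟩)) ≤
        P {ω | clusterCZ d r ω = ↑A} * (ENNReal.ofReal (Real.exp (-(s * n))) * Mtot ^ m) := by
    intro A
    by_cases hAm : A.card < m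
    · have hterm : ∀ g : Fin A.card → ℕ, P (S ⟨A, g⟩) ≤
          P {ω | clusterCZ d r ω = ↑A} * (ENNReal.ofReal (Real.exp (-(s * n))) * ∏ i, Mh (g i)) := by
        intro g
        by_cases hgn : n ≤ ∑ i, g i
        · rw [hS]
          simp only [if_pos (And.intro hAm hgn)]
          rw [hcondiid A (fA A g)]
          refine mul_le_mul_right ?_ _
          -- ∏ x ∈ A, ν (fA A g x) ≤ ofReal (exp (-(s n))) * ∏ i, Mh (g i)
          have hprod : ∏ x ∈ A, ν (fA A g x) = ∏ i, ν {g i} := by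
            rw [← Finset.prod_coe_sort A (fun x => ν (fA A g x))]
            have : ∀ x : {y // y ∈ A}, ν (fA A g ↑x) = ν {g (A.equivFin x)} := by
              intro x
              rw [hfA]
              simp only [dif_pos x.2]
            rw [Finset.prod_congr rfl (fun x _ => this x)]
            exact Equiv.prod_comp A.equivFin (fun i => ν {g i})
          rw [hprod]
          have hexp : (∏ i, ENNReal.ofReal (Real.exp (s * (g i : ℕ)))) =
              ENNReal.ofReal (Real.exp (s * ((∑ i, g i : ℕ) : ℝ))) := by
            rw [prod_ofReal_exp]
            congr 1
            rw [← Finset.mul_sum]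
            congr 1
            push_cast
            rfl
          have hfac : ENNReal.ofReal (Real.exp (-(s * n))) * ∏ i, Mh (g i)
              = (ENNReal.ofReal (Real.exp (-(s * n)))
                  * ENNReal.ofReal (Real.exp (s * ((∑ i, g i : ℕ) : ℝ)))) * ∏ i, ν {g i} := by
            rw [hMh]
            rw [Finset.prod_mul_distrib, hexp]
            ring
          rw [hfac]
          have hone : (1 : ℝ≥0∞) ≤ ENNReal.ofReal (Real.exp (-(s * n)))
              * ENNReal.ofReal (Real.exp (s * ((∑ i, g i : ℕ) : ℝ))) := by
            rw [← ENNReal.ofReal_mul (Real.exp_nonneg _), ← Real.exp_add]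
            refine ENNReal.one_le_ofReal.mpr (Real.one_le_exp ?_)
            have : (n : ℝ) ≤ ((∑ i, g i : ℕ) : ℝ) := by exact_mod_cast hgn
            nlinarith [hs.le]
          calc (∏ i, ν {g i}) = 1 * ∏ i, ν {g i} := (one_mul _).symm
            _ ≤ _ := mul_le_mul_left hone _
        · have hneg : ¬(A.card < m ∧ n ≤ ∑ i, g i) := fun h => hgn h.2
          rw [hS]
          simp only [if_neg hneg]
          simp
      refine le_trans (ENNReal.tsum_le_tsum hterm) ?_
      rw [ENNReal.tsum_mul_left, ENNReal.tsum_mul_left, tsum_pi_fin_prod Mh A.card]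
      rw [← hMtot_eq]
      exact mul_le_mul_right (mul_le_mul_right
        (pow_le_pow_right' hM1 hAm.le) _) _
    · have : ∀ g : Fin A.card → ℕ, P (S ⟨A, g⟩) = 0 := by
        intro g
        have hneg : ¬(A.card < m ∧ n ≤ ∑ i, g i) := fun h => hAm h.1
        rw [hS]
        simp only [if_neg hneg]
        simp
      rw [tsum_congr this]
      simp
  calc (∑' σ : (A : Finset (Fin d → ℤ)) × (Fin A.card → ℕ), P (S σ)) = ∑' A : Finset (Fin d → ℤ), ∑' g : Fin A.card → ℕ, P (S ⟨A, g⟩) := ENNReal.tsum_sigma' _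
    _ ≤ ∑' A : Finset (Fin d → ℤ), P {ω | clusterCZ d r ω = ↑A}
          * (ENNReal.ofReal (Real.exp (-(s * n))) * Mtot ^ m) := ENNReal.tsum_le_tsum hAbound
    _ = (∑' A : Finset (Fin d → ℤ), P {ω | clusterCZ d r ω = ↑A})
          * (ENNReal.ofReal (Real.exp (-(s * n))) * Mtot ^ m) := ENNReal.tsum_mul_right
    _ ≤ 1 * (ENNReal.ofReal (Real.exp (-(s * n))) * Mtot ^ m) := by
        refine mul_le_mul_left ?_ _
        have hdisj : Pairwise (Function.onFun Disjoint
            (fun A : Finset (Fin d → ℤ) => {ω : Cfg d r | clusterCZ d r ω = ↑A})) := by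
          intro A B hAB
          refine Set.disjoint_left.mpr fun ω h1 h2 => hAB ?_
          exact Finset.coe_injective (h1.symm.trans h2)
        rw [← measure_iUnion hdisj (fun A => measurableSet_clusterCZ_eq A)]
        exact prob_le_one
    _ = _ := one_mul _

lemma clusterC_decomp {d r : ℕ} (ω : Cfg d r) :
    clusterC d r ω = ⋃ x ∈ clusterCZ d r ω, (fun l => (x, l)) '' treeCluster d r x ω := by
  ext ⟨x, l⟩
  simp only [mem_iUnion, mem_image]
  rw [mem_clusterC_iff]
  constructor
  · rintro ⟨h1, h2⟩
    exact ⟨x, h1, l, h2, rfl⟩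
  · rintro ⟨x', hx', l', hl', heq⟩
    obtain ⟨rfl, rfl⟩ := Prod.mk.inj heq
    exact ⟨hx', hl'⟩

lemma lower_core (d r n : ℕ) :
    {ω : Cfg d r | (clusterCZ d r ω).Finite ∧ n ≤ (clusterCZ d r ω).ncard} ⊆
      {ω : Cfg d r | (clusterC d r ω).Finite ∧ n ≤ (clusterC d r ω).ncard}
      ∪ {ω : Cfg d r | ∃ x : Fin d → ℤ, (treeCluster d r x ω).Infinite} := by
  rintro ω ⟨hCZf, hn⟩
  by_cases hbad : ∃ x : Fin d → ℤ, (treeCluster d r x ω).Infinite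
  · exact Or.inr hbad
  push_neg at hbad
  have htf : ∀ x, (treeCluster d r x ω).Finite := fun x => hbad x
  left
  have hCf : (clusterC d r ω).Finite := by
    rw [clusterC_decomp ω]
    exact Set.Finite.biUnion hCZf (fun x _ => (htf x).image _)
  refine ⟨hCf, ?_⟩
  have hinj : Function.Injective (fun x : Fin d → ℤ => (x, ([] : List (Fin r)))) :=
    fun a b hab => congrArg Prod.fst hab
  have hsub : (fun x : Fin d → ℤ => (x, ([] : List (Fin r)))) '' clusterCZ d r ω ⊆
      clusterC d r ω := by
    rintro u ⟨x, hx, rfl⟩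
    exact mem_clusterC_iff.mpr ⟨hx, SimpleGraph.Reachable.refl _⟩
  calc n ≤ (clusterCZ d r ω).ncard := hn
    _ = ((fun x : Fin d → ℤ => (x, ([] : List (Fin r)))) '' clusterCZ d r ω).ncard :=
        (Set.ncard_image_of_injective _ hinj).symm
    _ ≤ (clusterC d r ω).ncard := Set.ncard_le_ncard hsub hCf

lemma small_core (d r n : ℕ) :
    {ω : Cfg d r | (clusterC d r ω).Finite ∧ n ≤ (clusterC d r ω).ncard} ⊆
      {ω : Cfg d r | (clusterCZ d r ω).Finite ∧ 1 ≤ (clusterCZ d r ω).ncard} := by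
  rintro ω ⟨hCf, -⟩
  have hCZf : (clusterCZ d r ω).Finite := clusterCZ_finite hCf
  exact ⟨hCZf, (Set.ncard_pos hCZf).mpr ⟨_, origin_mem_clusterCZ ω⟩⟩

end SubexpAux

set_option maxHeartbeats 1000000

/-- In the regime `p_c(ℤ^d) < p < 1/r`, the cluster of the origin of the
tree-decorated lattice satisfies the sub-exponential (stretched-exponential, exponent
`(d−1)/d`) two-sided bounds, GIVEN: (i) the analogous bounds for the lattice part `C_{ℤ^d}`
of the cluster, (ii)–(iii) conditioned on `C_{ℤ^d}`, the tree clusters at its vertices are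
i.i.d. with common (subcritical Galton–Watson total size) law `ν` having a finite exponential
moment, and the tree clusters are a.s. finite. -/
theorem subexp_decay_intermediate_regime
    (d r : ℕ) (hd : 2 ≤ d) (hr : 1 ≤ r)
    (p : ℝ≥0∞) (hp : p ≤ 1)
    (P : Measure (Sym2 ((Fin d → ℤ) × List (Fin r)) → Bool))
    (hP : IsBernoulliPercolation (treeLatticeGraph d r) p hp P)
    (φ₁ φ₂ : ℝ) (hφ₂ : 0 < φ₂)
    (hlattice : ∀ n : ℕ, 1 ≤ n →
      ENNReal.ofReal (Real.exp (-φ₁ * (n : ℝ) ^ (((d : ℝ) - 1) / d))) ≤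
          P {ω | (clusterCZ d r ω).Finite ∧ n ≤ (clusterCZ d r ω).ncard} ∧
        P {ω | (clusterCZ d r ω).Finite ∧ n ≤ (clusterCZ d r ω).ncard} ≤
          ENNReal.ofReal (Real.exp (-φ₂ * (n : ℝ) ^ (((d : ℝ) - 1) / d))))
    (ν : Measure ℕ) (hν : IsProbabilityMeasure ν)
    (s : ℝ) (hs : 0 < s)
    (hmom : ∫⁻ k, ENNReal.ofReal (Real.exp (s * k)) ∂ν < ⊤)
    (htreefin : P {ω | ∃ x : Fin d → ℤ, (treeCluster d r x ω).Infinite} = 0)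
    (hcondiid : ∀ (A : Finset (Fin d → ℤ)) (f : (Fin d → ℤ) → Set ℕ),
      P {ω | clusterCZ d r ω = ↑A ∧ ∀ x ∈ A, (treeCluster d r x ω).ncard ∈ f x} =
        P {ω | clusterCZ d r ω = ↑A} * ∏ x ∈ A, ν (f x)) :
    ∃ ψ₁ : ℝ, ∃ ψ₂ > (0 : ℝ), ∀ n : ℕ, 1 ≤ n →
      ENNReal.ofReal (Real.exp (-ψ₁ * (n : ℝ) ^ (((d : ℝ) - 1) / d))) ≤
          P {ω | (clusterC d r ω).Finite ∧ n ≤ (clusterC d r ω).ncard} ∧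
        P {ω | (clusterC d r ω).Finite ∧ n ≤ (clusterC d r ω).ncard} ≤
          ENNReal.ofReal (Real.exp (-ψ₂ * (n : ℝ) ^ (((d : ℝ) - 1) / d))) := by
  classical
  obtain ⟨hPprob, -, -⟩ := hP
  haveI := hPprob
  haveI := hν
  set α : ℝ := ((d : ℝ) - 1) / d with hαdef
  have hd0 : (0 : ℝ) < d := by
    have : (2 : ℝ) ≤ d := by exact_mod_cast hd
    linarith
  have hd2 : (2 : ℝ) ≤ d := by exact_mod_cast hd
  have hα0 : 0 ≤ α := by
    apply div_nonneg <;> linarith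
  have hα1 : α ≤ 1 := by
    rw [div_le_one hd0]; linarith
  set Mtot : ℝ≥0∞ := ∫⁻ k, ENNReal.ofReal (Real.exp (s * k)) ∂ν with hMtotdef
  have hM1 : 1 ≤ Mtot := SubexpAux.one_le_Mtot ν hs.le
  have hMne : Mtot ≠ ⊤ := hmom.ne
  set Mr : ℝ := Mtot.toReal with hMrdef
  have hMr1 : 1 ≤ Mr := by
    have := ENNReal.toReal_mono hMne hM1
    simpa using this
  have hMtoteq : Mtot = ENNReal.ofReal Mr := (ENNReal.ofReal_toReal hMne).symm
  set L : ℝ := Real.log Mr with hLdef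
  have hL0 : 0 ≤ L := Real.log_nonneg hMr1
  have hexpL : Real.exp L = Mr := Real.exp_log (by linarith)
  set ε : ℝ := s / (2 * (L + 1)) with hεdef
  have hε0 : 0 < ε := div_pos hs (by linarith)
  set c1 : ℝ := φ₂ * ε ^ α with hc1def
  have hc10 : 0 < c1 := mul_pos hφ₂ (Real.rpow_pos_of_pos hε0 α)
  set c2 : ℝ := s / 2 with hc2def
  have hc20 : 0 < c2 := by positivity
  set c : ℝ := min c1 c2 with hcdef
  have hc0 : 0 < c := lt_min hc10 hc20
  set B : ℝ := (2 / c) * Real.log (1 + Mr) with hBdef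
  have hlog1M : 0 < Real.log (1 + Mr) := Real.log_pos (by linarith)
  have hB0 : 0 < B := mul_pos (by positivity) hlog1M
  refine ⟨φ₁, min (c / 2) (φ₂ / B), lt_min (by positivity) (div_pos hφ₂ hB0), ?_⟩
  set ψ₂ : ℝ := min (c / 2) (φ₂ / B) with hψdef
  have hψ0 : 0 < ψ₂ := lt_min (by positivity) (div_pos hφ₂ hB0)
  intro n hn
  have hna : (1 : ℝ) ≤ (n : ℝ) := by exact_mod_cast hn
  set t : ℝ := (n : ℝ) ^ α with htdef
  have ht1 : 1 ≤ t := Real.one_le_rpow hna hα0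
  have ht0 : 0 ≤ t := by linarith
  have htn : t ≤ (n : ℝ) := by
    calc t ≤ (n : ℝ) ^ (1 : ℝ) := Real.rpow_le_rpow_of_exponent_le hna hα1
      _ = (n : ℝ) := Real.rpow_one _
  constructor
  · -- lower bound
    refine le_trans (hlattice n hn).1 ?_
    calc P {ω | (clusterCZ d r ω).Finite ∧ n ≤ (clusterCZ d r ω).ncard}
        ≤ P ({ω | (clusterC d r ω).Finite ∧ n ≤ (clusterC d r ω).ncard}
            ∪ {ω | ∃ x : Fin d → ℤ, (treeCluster d r x ω).Infinite}) :=
          measure_mono (SubexpAux.lower_core d r n)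
      _ ≤ P {ω | (clusterC d r ω).Finite ∧ n ≤ (clusterC d r ω).ncard}
            + P {ω | ∃ x : Fin d → ℤ, (treeCluster d r x ω).Infinite} := measure_union_le _ _
      _ = P {ω | (clusterC d r ω).Finite ∧ n ≤ (clusterC d r ω).ncard} := by
          rw [htreefin, add_zero]
  · -- upper bound
    set m : ℕ := ⌈ε * n⌉₊ with hmdef
    have hm0 : 0 < m := Nat.ceil_pos.mpr (mul_pos hε0 (by linarith : (0:ℝ) < n))
    have hmlow : ε * n ≤ (m : ℝ) := Nat.le_ceil _
    have hmhigh : (m : ℝ) ≤ ε * n + 1 :=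
      (Nat.ceil_lt_add_one (by positivity : (0:ℝ) ≤ ε * n)).le
    -- main estimate from upper_core
    have hup := SubexpAux.upper_core d r P ν s hs hcondiid m n
    rw [htreefin, zero_add] at hup
    have hlatm := (hlattice m hm0).2
    -- term 1
    have hterm1 : P {ω | (clusterCZ d r ω).Finite ∧ m ≤ (clusterCZ d r ω).ncard} ≤
        ENNReal.ofReal (Real.exp (-(c1 * t))) := by
      refine le_trans hlatm (ENNReal.ofReal_le_ofReal (Real.exp_le_exp.mpr ?_))
      have h1 : ε ^ α * t ≤ (m : ℝ) ^ α := by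
        rw [htdef, ← Real.mul_rpow hε0.le (by positivity)]
        exact Real.rpow_le_rpow (by positivity) hmlow hα0
      have h2 : c1 * t ≤ φ₂ * (m : ℝ) ^ α := by
        rw [hc1def, mul_assoc]
        exact mul_le_mul_of_nonneg_left h1 hφ₂.le
      linarith
    -- term 2
    have hterm2 : ENNReal.ofReal (Real.exp (-(s * n))) * Mtot ^ m ≤
        ENNReal.ofReal (Mr * Real.exp (-(c2 * t))) := by
      have hpow : Mtot ^ m = ENNReal.ofReal (Real.exp ((m : ℝ) * L)) := by
        rw [hMtoteq, ← hexpL, ← ENNReal.ofReal_pow (Real.exp_nonneg _), ← Real.exp_nat_mul]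
      rw [hpow, ← ENNReal.ofReal_mul (Real.exp_nonneg _), ← Real.exp_add]
      refine ENNReal.ofReal_le_ofReal ?_
      have hεL : ε * L ≤ s / 2 := by
        rw [hεdef]
        rw [div_mul_eq_mul_div, div_le_div_iff₀ (by linarith) (by norm_num : (0:ℝ) < 2)]
        nlinarith
      have hmL : (m : ℝ) * L ≤ (s / 2) * n + L := by
        calc (m : ℝ) * L ≤ (ε * n + 1) * L := mul_le_mul_of_nonneg_right hmhigh hL0
          _ = (ε * L) * n + L := by ring
          _ ≤ (s / 2) * n + L := by nlinarith
      have hexpineq : -(s * n) + (m : ℝ) * L ≤ L + -(c2 * t) := by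
        have h3 : (s / 2) * t ≤ (s / 2) * n :=
          mul_le_mul_of_nonneg_left htn (by positivity)
        have h5 : c2 * t = (s / 2) * t := by rw [hc2def]
        linarith
      calc Real.exp (-(s * n) + (m : ℝ) * L) ≤ Real.exp (L + -(c2 * t)) :=
            Real.exp_le_exp.mpr hexpineq
        _ = Real.exp L * Real.exp (-(c2 * t)) := Real.exp_add _ _
        _ = Mr * Real.exp (-(c2 * t)) := by rw [hexpL]
    -- combined upper estimate
    have hcomb : P {ω | (clusterC d r ω).Finite ∧ n ≤ (clusterC d r ω).ncard} ≤
        ENNReal.ofReal ((1 + Mr) * Real.exp (-(c * t))) := by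
      refine le_trans hup (le_trans (add_le_add hterm1 hterm2) ?_)
      rw [← ENNReal.ofReal_add (by positivity) (by positivity)]
      refine ENNReal.ofReal_le_ofReal ?_
      have e1 : Real.exp (-(c1 * t)) ≤ Real.exp (-(c * t)) :=
        Real.exp_le_exp.mpr (by
          have : c * t ≤ c1 * t := mul_le_mul_of_nonneg_right (min_le_left _ _) ht0
          linarith)
      have e2 : Real.exp (-(c2 * t)) ≤ Real.exp (-(c * t)) :=
        Real.exp_le_exp.mpr (by
          have : c * t ≤ c2 * t := mul_le_mul_of_nonneg_right (min_le_right _ _) ht0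
          linarith)
      have hMr0 : 0 ≤ Mr := by linarith
      nlinarith [Real.exp_nonneg (-(c * t)), Real.exp_nonneg (-(c2 * t))]
    -- small-n estimate
    have hsmall : P {ω | (clusterC d r ω).Finite ∧ n ≤ (clusterC d r ω).ncard} ≤
        ENNReal.ofReal (Real.exp (-φ₂)) := by
      refine le_trans (measure_mono (SubexpAux.small_core d r n)) ?_
      refine le_trans (hlattice 1 le_rfl).2 (ENNReal.ofReal_le_ofReal ?_)
      simp
    -- conclude by case analysis
    by_cases hBt : B ≤ t
    · refine le_trans hcomb (ENNReal.ofReal_le_ofReal ?_)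
      have hlogeq : Real.log (1 + Mr) = (c / 2) * B := by
        rw [hBdef]
        field_simp
      have h1M : (1 + Mr) = Real.exp ((c / 2) * B) := by
        rw [← hlogeq, Real.exp_log (by linarith)]
      calc (1 + Mr) * Real.exp (-(c * t)) = Real.exp ((c / 2) * B + -(c * t)) := by
            rw [h1M, ← Real.exp_add]
        _ ≤ Real.exp (-ψ₂ * t) := by
            refine Real.exp_le_exp.mpr ?_
            have h5 : (c / 2) * B ≤ (c / 2) * t := mul_le_mul_of_nonneg_left hBt (by positivity)
            have h6 : ψ₂ * t ≤ (c / 2) * t := mul_le_mul_of_nonneg_right (min_le_left _ _) ht0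
            linarith
    · push_neg at hBt
      refine le_trans hsmall (ENNReal.ofReal_le_ofReal (Real.exp_le_exp.mpr ?_))
      have h7 : ψ₂ * t ≤ (φ₂ / B) * t := mul_le_mul_of_nonneg_right (min_le_right _ _) ht0
      have h8 : (φ₂ / B) * t ≤ (φ₂ / B) * B := mul_le_mul_of_nonneg_left hBt.le (by positivity)
      have h9 : (φ₂ / B) * B = φ₂ := by field_simp
      linarith
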